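/- arXiv:2301.04257 — 5 statements merged into one kernel-verified Lean document; each statement's English description precedes it below -/
import Mathlib

section
/- Let u = (u_1, …, u_D) and v be D+1 independent random variables, each uniformly distributed on [−1, 1]. Then for any fixed x ∈ ℝ^D, E[ (⟨u, x⟩ + v)⁴ ] = (1/3)·‖x‖₂⁴ − (2/15)·‖x‖₄⁴ + (2/3)·‖x‖₂² + 1/5, where ⟨u, x⟩ = Σ_{i=1}^D u_i x_i. -/
open MeasureTheory Real

/-- The uniform probability distribution on `[-1, 1]`. -/
noncomputable def unif : Measure ℝ :=
  (2 : ENNReal)⁻¹ • (volume.restrict (Set.Icc (-1 : ℝ) 1))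

instance : IsProbabilityMeasure unif := by
  constructor
  simp [unif, Real.volume_Icc]
  rw [show (1:ℝ) + 1 = 2 by norm_num]
  rw [← ENNReal.ofReal_ofNat, ENNReal.inv_mul_cancel] <;> simp

lemma integral_unif_pow (n : ℕ) :
    ∫ t, t ^ n ∂unif = if Even n then ((n : ℝ) + 1)⁻¹ else 0 := by
  rw [unif, integral_smul_measure]
  rw [MeasureTheory.integral_Icc_eq_integral_Ioc, ← intervalIntegral.integral_of_le (by norm_num : (-1:ℝ) ≤ 1)]
  rw [integral_pow]
  rcases Nat.even_or_odd n with h | h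
  · have h1 : (-1 : ℝ) ^ (n + 1) = -1 := Odd.neg_one_pow (by simpa using h.add_one)
    simp only [h, if_true, h1, one_pow, ENNReal.toReal_inv, ENNReal.toReal_ofNat, smul_eq_mul]
    have : ((n : ℝ) + 1) ≠ 0 := by positivity
    field_simp
    norm_num
  · have h1 : (-1 : ℝ) ^ (n + 1) = 1 := Even.neg_one_pow (by simpa using h.add_one)
    simp [h1, Nat.not_even_iff_odd.2 h]

lemma unif_Icc : unif (Set.Icc (-1 : ℝ) 1) = 1 := by
  simp [unif, Real.volume_Icc]
  rw [show (1:ℝ) + 1 = 2 by norm_num]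
  rw [← ENNReal.ofReal_ofNat, ENNReal.inv_mul_cancel] <;> simp

lemma unif_ae_mem : ∀ᵐ t ∂unif, t ∈ Set.Icc (-1 : ℝ) 1 := by
  rw [unif]
  exact Measure.ae_smul_measure (ae_restrict_mem measurableSet_Icc) _

lemma piU_ae_mem (D : ℕ) :
    ∀ᵐ u ∂(Measure.pi fun _ : Fin D => unif), ∀ i, u i ∈ Set.Icc (-1 : ℝ) 1 := by
  have h : (Measure.pi fun _ : Fin D => unif) (Set.pi Set.univ fun _ => (Set.Icc (-1 : ℝ) 1))ᶜ = 0 := by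
    rw [measure_compl (MeasurableSet.univ_pi fun _ => measurableSet_Icc) (measure_ne_top _ _)]
    rw [Measure.pi_pi]
    simp [unif_Icc]
  rw [ae_iff]
  refine measure_mono_null ?_ h
  intro u hu
  simp only [Set.mem_setOf_eq] at hu
  simp only [Set.mem_compl_iff, Set.mem_pi, Set.mem_univ, forall_true_left]
  exact fun hh => hu hh

lemma integrable_of_bound {α : Type*} [MeasurableSpace α] (μ : Measure α) [IsFiniteMeasure μ]
    {f : α → ℝ} (hm : AEStronglyMeasurable f μ) (C : ℝ) (h : ∀ᵐ a ∂μ, |f a| ≤ C) :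
    Integrable f μ :=
  (integrable_const C).mono' hm (by simpa using h)

lemma prod_ae_mem {α β : Type*} [MeasurableSpace α] [MeasurableSpace β]
    (μ : Measure α) (ν : Measure β) [SFinite ν] {s : Set α} {t : Set β}
    (hs : MeasurableSet s) (ht : MeasurableSet t)
    (hμ : ∀ᵐ a ∂μ, a ∈ s) (hν : ∀ᵐ b ∂ν, b ∈ t) :
    ∀ᵐ p ∂μ.prod ν, p.1 ∈ s ∧ p.2 ∈ t := by
  refine (Measure.ae_prod_iff_ae_ae (p := fun z => z.1 ∈ s ∧ z.2 ∈ t)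
    ((hs.preimage measurable_fst).inter (ht.preimage measurable_snd))).2 ?_
  filter_upwards [hμ] with a ha
  filter_upwards [hν] with b hb
  exact ⟨ha, hb⟩

lemma abs_S_le {D : ℕ} (x : Fin D → ℝ) {u : Fin D → ℝ} (hu : ∀ i, u i ∈ Set.Icc (-1 : ℝ) 1) :
    |∑ i, u i * x i| ≤ ∑ i, |x i| := by
  refine (Finset.abs_sum_le_sum_abs _ _).trans (Finset.sum_le_sum fun i _ => ?_)
  rw [abs_mul]
  have : |u i| ≤ 1 := abs_le.2 ⟨(hu i).1, (hu i).2⟩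
  calc |u i| * |x i| ≤ 1 * |x i| := by
        exact mul_le_mul_of_nonneg_right this (abs_nonneg _)
    _ = |x i| := one_mul _

lemma integrable_poly (D : ℕ) (c : ℝ) (m j : ℕ) (x : Fin D → ℝ) :
    Integrable (fun p : ℝ × (Fin D → ℝ) => c * p.1 ^ m * (∑ i, p.2 i * x i) ^ j)
      (unif.prod (Measure.pi fun _ : Fin D => unif)) := by
  refine integrable_of_bound _ ?_ (|c| * (∑ i, |x i|) ^ j) ?_
  · exact ((continuous_const.mul (continuous_fst.pow m)).mul
      ((continuous_finset_sum _ fun i _ =>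
        ((continuous_apply i).comp continuous_snd).mul continuous_const).pow j)).aestronglyMeasurable
  · filter_upwards [prod_ae_mem unif _ measurableSet_Icc
      (MeasurableSet.univ_pi fun _ : Fin D => measurableSet_Icc) unif_ae_mem
      ((piU_ae_mem D).mono fun u hu => Set.mem_univ_pi.2 hu)] with p hp
    have h1 : |p.1| ≤ 1 := abs_le.2 ⟨hp.1.1, hp.1.2⟩
    have h2 : |∑ i, p.2 i * x i| ≤ ∑ i, |x i| := abs_S_le x (Set.mem_univ_pi.1 hp.2)
    rw [abs_mul, abs_mul, abs_pow, abs_pow]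
    have hb1 : |p.1| ^ m ≤ 1 := by
      calc |p.1| ^ m ≤ 1 ^ m := pow_le_pow_left₀ (abs_nonneg _) h1 m
        _ = 1 := one_pow m
    have hb2 : |∑ i, p.2 i * x i| ^ j ≤ (∑ i, |x i|) ^ j :=
      pow_le_pow_left₀ (abs_nonneg _) h2 j
    calc |c| * |p.1| ^ m * |∑ i, p.2 i * x i| ^ j
        ≤ |c| * 1 * (∑ i, |x i|) ^ j := by
          apply mul_le_mul (mul_le_mul_of_nonneg_left hb1 (abs_nonneg _)) hb2
            (pow_nonneg (abs_nonneg _) _) (by positivity)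
      _ = |c| * (∑ i, |x i|) ^ j := by ring

lemma integrable_poly' (D : ℕ) (c : ℝ) (j m : ℕ) (x : Fin D → ℝ) :
    Integrable (fun p : (Fin D → ℝ) × ℝ => c * (∑ i, p.1 i * x i) ^ j * p.2 ^ m)
      ((Measure.pi fun _ : Fin D => unif).prod unif) := by
  refine integrable_of_bound _ ?_ (|c| * (∑ i, |x i|) ^ j) ?_
  · exact ((continuous_const.mul
      ((continuous_finset_sum _ fun i _ =>
        ((continuous_apply i).comp continuous_fst).mul continuous_const).pow j)).mul
      (continuous_snd.pow m)).aestronglyMeasurable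
  · filter_upwards [prod_ae_mem _ unif
      (MeasurableSet.univ_pi fun _ : Fin D => measurableSet_Icc) measurableSet_Icc
      ((piU_ae_mem D).mono fun u hu => Set.mem_univ_pi.2 hu) unif_ae_mem] with p hp
    have h1 : |p.2| ≤ 1 := abs_le.2 ⟨hp.2.1, hp.2.2⟩
    have h2 : |∑ i, p.1 i * x i| ≤ ∑ i, |x i| := abs_S_le x (Set.mem_univ_pi.1 hp.1)
    rw [abs_mul, abs_mul, abs_pow, abs_pow]
    have hb1 : |p.2| ^ m ≤ 1 := by
      calc |p.2| ^ m ≤ 1 ^ m := pow_le_pow_left₀ (abs_nonneg _) h1 m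
        _ = 1 := one_pow m
    have hb2 : |∑ i, p.1 i * x i| ^ j ≤ (∑ i, |x i|) ^ j :=
      pow_le_pow_left₀ (abs_nonneg _) h2 j
    calc |c| * |∑ i, p.1 i * x i| ^ j * |p.2| ^ m
        ≤ |c| * (∑ i, |x i|) ^ j * 1 := by
          apply mul_le_mul (mul_le_mul_of_nonneg_left hb2 (abs_nonneg _)) hb1
            (pow_nonneg (abs_nonneg _) _) (by positivity)
      _ = |c| * (∑ i, |x i|) ^ j := by ring

lemma prod_term (D : ℕ) (x : Fin D → ℝ) (c : ℝ) (m j : ℕ) :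
    ∫ p : ℝ × (Fin D → ℝ), c * p.1 ^ m * (∑ i, p.2 i * x i) ^ j
        ∂(unif.prod (Measure.pi fun _ : Fin D => unif)) =
      c * (if Even m then ((m : ℝ) + 1)⁻¹ else 0) *
        ∫ u, (∑ i, u i * x i) ^ j ∂(Measure.pi fun _ : Fin D => unif) := by
  have := MeasureTheory.integral_prod_mul (μ := unif)
    (ν := Measure.pi fun _ : Fin D => unif)
    (f := fun y => c * y ^ m) (g := fun u => (∑ i, u i * x i) ^ j)
  simp only [mul_assoc] at this ⊢
  rw [this, integral_const_mul, integral_unif_pow]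
  ring

lemma prod_term' (D : ℕ) (x : Fin D → ℝ) (c : ℝ) (j m : ℕ) :
    ∫ p : (Fin D → ℝ) × ℝ, c * (∑ i, p.1 i * x i) ^ j * p.2 ^ m
        ∂((Measure.pi fun _ : Fin D => unif).prod unif) =
      c * (∫ u, (∑ i, u i * x i) ^ j ∂(Measure.pi fun _ : Fin D => unif)) *
        (if Even m then ((m : ℝ) + 1)⁻¹ else 0) := by
  have := MeasureTheory.integral_prod_mul (μ := Measure.pi fun _ : Fin D => unif)
    (ν := unif)
    (f := fun u => c * (∑ i, u i * x i) ^ j) (g := fun y => y ^ m)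
  rw [show (fun p : (Fin D → ℝ) × ℝ => c * (∑ i, p.1 i * x i) ^ j * p.2 ^ m)
      = fun p : (Fin D → ℝ) × ℝ =>
        (fun u => c * (∑ i, u i * x i) ^ j) p.1 * (fun y => y ^ m) p.2 from rfl]
  rw [this, integral_const_mul, integral_unif_pow]

lemma change_var (D : ℕ) (x : Fin (D + 1) → ℝ) (k : ℕ) :
    ∫ u, (∑ i, u i * x i) ^ k ∂(Measure.pi fun _ : Fin (D + 1) => unif) =
      ∫ p : ℝ × (Fin D → ℝ), (p.1 * x 0 + ∑ i, p.2 i * x i.succ) ^ k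
        ∂(unif.prod (Measure.pi fun _ : Fin D => unif)) := by
  have h := ((measurePreserving_piFinSuccAbove (fun _ : Fin (D + 1) => unif) 0).symm).integral_comp
    (MeasurableEquiv.measurableEmbedding _) (fun u : Fin (D + 1) → ℝ => (∑ i, u i * x i) ^ k)
  rw [← h]
  congr 1
  ext p
  simp only [MeasurableEquiv.piFinSuccAbove_symm_apply, Fin.insertNthEquiv, Equiv.coe_fn_mk,
    Fin.insertNth_zero]
  rw [Fin.sum_univ_succ]
  simp [Fin.cons_zero, Fin.cons_succ]

lemma MeasureTheory.Integrable.add''' {α : Type*} [MeasurableSpace α] {μ : Measure α}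
    {f g : α → ℝ} (hf : Integrable f μ) (hg : Integrable g μ) :
    Integrable (fun a => f a + g a) μ := hf.add hg

lemma expand_int (D : ℕ) (k : ℕ) (a : ℝ) (x : Fin D → ℝ) :
    ∫ p : ℝ × (Fin D → ℝ), (p.1 * a + ∑ i, p.2 i * x i) ^ k
        ∂(unif.prod (Measure.pi fun _ : Fin D => unif)) =
      ∑ m ∈ Finset.range (k + 1), (k.choose m : ℝ) * a ^ m *
        (if Even m then ((m : ℝ) + 1)⁻¹ else 0) *
        ∫ u, (∑ i, u i * x i) ^ (k - m) ∂(Measure.pi fun _ : Fin D => unif) := by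
  have e : (fun p : ℝ × (Fin D → ℝ) => (p.1 * a + ∑ i, p.2 i * x i) ^ k)
      = fun p => ∑ m ∈ Finset.range (k + 1),
          ((k.choose m : ℝ) * a ^ m) * p.1 ^ m * (∑ i, p.2 i * x i) ^ (k - m) := by
    ext p; rw [add_pow]; exact Finset.sum_congr rfl fun m _ => by rw [mul_pow]; ring
  rw [e, integral_finset_sum _ fun m _ => integrable_poly D _ m (k - m) x]
  refine Finset.sum_congr rfl fun m _ => ?_
  rw [prod_term] <;> ring

lemma piU_moments : ∀ (D : ℕ) (x : Fin D → ℝ),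
    (∫ u, (∑ i, u i * x i) ^ 1 ∂(Measure.pi fun _ : Fin D => unif)) = 0 ∧
    (∫ u, (∑ i, u i * x i) ^ 2 ∂(Measure.pi fun _ : Fin D => unif)) = (∑ i, x i ^ 2) / 3 ∧
    (∫ u, (∑ i, u i * x i) ^ 3 ∂(Measure.pi fun _ : Fin D => unif)) = 0 ∧
    (∫ u, (∑ i, u i * x i) ^ 4 ∂(Measure.pi fun _ : Fin D => unif)) =
      (∑ i, x i ^ 2) ^ 2 / 3 - 2 * (∑ i, x i ^ 4) / 15 := by
  intro D
  induction D with
  | zero =>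
    intro x
    simp
  | succ D ih =>
    intro x
    obtain ⟨ih1, ih2, ih3, ih4⟩ := ih fun i => x i.succ
    have ih1' : (∫ u, (∑ i, u i * x i.succ) ∂(Measure.pi fun _ : Fin D => unif)) = 0 := by
      simpa using ih1
    have ih0 : (∫ u : Fin D → ℝ, (1:ℝ) ∂(Measure.pi fun _ : Fin D => unif)) = 1 := by
      simp
    set a := x 0 with ha
    have hS2 : ∑ i : Fin (D + 1), x i ^ 2 = a ^ 2 + ∑ i : Fin D, x i.succ ^ 2 :=
      Fin.sum_univ_succ _
    have hS4 : ∑ i : Fin (D + 1), x i ^ 4 = a ^ 4 + ∑ i : Fin D, x i.succ ^ 4 :=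
      Fin.sum_univ_succ _
    refine ⟨?_, ?_, ?_, ?_⟩
    · rw [change_var D x 1, expand_int]
      norm_num [Finset.sum_range_succ, Nat.even_iff, Nat.choose, ih1']
    · rw [change_var D x 2, expand_int]
      norm_num [Finset.sum_range_succ, ih1', ih2, ih0, hS2]
      ring
    · rw [change_var D x 3, expand_int]
      norm_num [Finset.sum_range_succ, Nat.even_iff, Nat.choose, ih1', ih2, ih3, ih0]
    · rw [change_var D x 4, expand_int]
      norm_num [Finset.sum_range_succ, Nat.even_iff, Nat.choose, ih1', ih2, ih3, ih4, ih0, hS2, hS4]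
      ring

lemma expand_int' (D : ℕ) (k : ℕ) (x : Fin D → ℝ) :
    ∫ p : (Fin D → ℝ) × ℝ, ((∑ i, p.1 i * x i) + p.2) ^ k
        ∂((Measure.pi fun _ : Fin D => unif).prod unif) =
      ∑ m ∈ Finset.range (k + 1), (k.choose m : ℝ) *
        (∫ u, (∑ i, u i * x i) ^ m ∂(Measure.pi fun _ : Fin D => unif)) *
        (if Even (k - m) then (((k - m : ℕ) : ℝ) + 1)⁻¹ else 0) := by
  have e : (fun p : (Fin D → ℝ) × ℝ => ((∑ i, p.1 i * x i) + p.2) ^ k)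
      = fun p => ∑ m ∈ Finset.range (k + 1),
          (k.choose m : ℝ) * (∑ i, p.1 i * x i) ^ m * p.2 ^ (k - m) := by
    ext p; rw [add_pow]; exact Finset.sum_congr rfl fun m _ => by ring
  rw [e, integral_finset_sum _ fun m _ => integrable_poly' D _ m (k - m) x]
  refine Finset.sum_congr rfl fun m _ => ?_
  rw [prod_term'] <;> ring

/-- if `u = (u_1,…,u_D)` and `v` are `D+1` independent random variables, each
uniform on `[-1,1]`, then for any fixed `x ∈ ℝ^D`,
`E[(⟨u,x⟩ + v)⁴] = (1/3)‖x‖₂⁴ − (2/15)‖x‖₄⁴ + (2/3)‖x‖₂² + 1/5`. -/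
theorem stmt_6 (D : ℕ) (hD : 1 ≤ D) (x : Fin D → ℝ) :
    ∫ p : (Fin D → ℝ) × ℝ, ((∑ i, p.1 i * x i) + p.2) ^ 4
        ∂((Measure.pi fun _ : Fin D => unif).prod unif) =
      (1 / 3) * (∑ i, x i ^ 2) ^ 2 - (2 / 15) * (∑ i, x i ^ 4) +
        (2 / 3) * (∑ i, x i ^ 2) + 1 / 5 := by
  obtain ⟨m1, m2, m3, m4⟩ := piU_moments D x
  have m0 : (∫ u : Fin D → ℝ, (1:ℝ) ∂(Measure.pi fun _ : Fin D => unif)) = 1 := by simp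
  rw [expand_int' D 4 x]
  norm_num [Finset.sum_range_succ, Nat.even_iff, Nat.choose, m1, m2, m3, m4, m0]
  ring
end

section
/- Let ε > 0 and let a, b, c, d be real numbers with a ≤ b − ε, b ≤ c, and c + ε ≤ d. Let X and Y be real random variables with E[X] = E[Y] = 0, such that X ∈ [b, c] almost surely and Y ∈ [a, b − ε] ∪ [c + ε, d] almost surely. Then E[ max(X, 0) ] < E[ max(Y, 0) ]. -/
open MeasureTheory

/-- Let `ε > 0` and `a ≤ b − ε`, `b ≤ c`, `c + ε ≤ d`. If `X`, `Y` are mean-zero real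
random variables with `X ∈ [b, c]` a.s. and `Y ∈ [a, b − ε] ∪ [c + ε, d]` a.s., then
`E[max(X, 0)] < E[max(Y, 0)]`. -/
theorem stmt_15 {Ω₁ Ω₂ : Type*} [MeasurableSpace Ω₁] [MeasurableSpace Ω₂]
    (μ₁ : Measure Ω₁) (μ₂ : Measure Ω₂) [IsProbabilityMeasure μ₁] [IsProbabilityMeasure μ₂]
    (ε a b c d : ℝ) (hε : 0 < ε) (hab : a ≤ b - ε) (hbc : b ≤ c) (hcd : c + ε ≤ d)
    (X : Ω₁ → ℝ) (Y : Ω₂ → ℝ) (hX : Measurable X) (hY : Measurable Y)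
    (hXmean : ∫ ω, X ω ∂μ₁ = 0) (hYmean : ∫ ω, Y ω ∂μ₂ = 0)
    (hXsupp : ∀ᵐ ω ∂μ₁, X ω ∈ Set.Icc b c)
    (hYsupp : ∀ᵐ ω ∂μ₂, Y ω ∈ Set.Icc a (b - ε) ∪ Set.Icc (c + ε) d) :
    ∫ ω, max (X ω) 0 ∂μ₁ < ∫ ω, max (Y ω) 0 ∂μ₂ := by
  -- integrability of X
  have hXbd : ∀ᵐ ω ∂μ₁, ‖X ω‖ ≤ max |b| |c| := by
    filter_upwards [hXsupp] with ω hω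
    rw [Real.norm_eq_abs]
    rcases hω with ⟨h1, h2⟩
    refine abs_le.mpr ⟨?_, ?_⟩
    · have : -(max |b| |c|) ≤ -|b| := by simp [le_max_left]
      linarith [neg_abs_le b]
    · have : |c| ≤ max |b| |c| := le_max_right _ _
      linarith [le_abs_self c]
  have hXint : Integrable X μ₁ :=
    (integrable_const (max |b| |c|)).mono' hX.aestronglyMeasurable hXbd
  -- Y bounded: a ≤ Y ≤ d a.s.
  have hYad : ∀ᵐ ω ∂μ₂, a ≤ Y ω ∧ Y ω ≤ d := by
    filter_upwards [hYsupp] with ω hω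
    rcases hω with ⟨h1, h2⟩ | ⟨h1, h2⟩
    · constructor <;> linarith
    · constructor <;> linarith
  have hYbd : ∀ᵐ ω ∂μ₂, ‖Y ω‖ ≤ max |a| |d| := by
    filter_upwards [hYad] with ω hω
    rw [Real.norm_eq_abs]
    refine abs_le.mpr ⟨?_, ?_⟩
    · have : -(max |a| |d|) ≤ -|a| := by simp [le_max_left]
      linarith [neg_abs_le a, hω.1]
    · have : |d| ≤ max |a| |d| := le_max_right _ _
      linarith [le_abs_self d, hω.2]
  have hYint : Integrable Y μ₂ :=
    (integrable_const (max |a| |d|)).mono' hY.aestronglyMeasurable hYbd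
  have hXpint : Integrable (fun ω => max (X ω) 0) μ₁ := hXint.pos_part
  have hYpint : Integrable (fun ω => max (Y ω) 0) μ₂ := hYint.pos_part
  -- b ≤ 0 ≤ c
  have hb0 : b ≤ 0 := by
    have h := integral_mono_ae (integrable_const b) hXint
      (by filter_upwards [hXsupp] with ω hω; exact hω.1)
    simpa [hXmean] using h
  have hc0 : 0 ≤ c := by
    have h := integral_mono_ae hXint (integrable_const c)
      (by filter_upwards [hXsupp] with ω hω; exact hω.2)
    simpa [hXmean] using h
  -- the line for Y
  set s : ℝ := (c + ε) / (c - b + 2 * ε) with hs_def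
  have hden : 0 < c - b + 2 * ε := by linarith
  have hs_mul : s * (c - b + 2 * ε) = c + ε := div_mul_cancel₀ _ (ne_of_gt hden)
  have hs0 : 0 ≤ s := div_nonneg (by linarith) hden.le
  have hs1 : s ≤ 1 := by
    rw [hs_def, div_le_one hden]; linarith
  -- lower bound for ∫ max(Y,0)
  have hQ : s * (ε - b) ≤ ∫ ω, max (Y ω) 0 ∂μ₂ := by
    have hptwise : ∀ᵐ ω ∂μ₂, s * (Y ω - (b - ε)) ≤ max (Y ω) 0 := by
      filter_upwards [hYsupp] with ω hω
      rcases hω with ⟨h1, h2⟩ | ⟨h1, h2⟩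
      · have : s * (Y ω - (b - ε)) ≤ 0 :=
          mul_nonpos_of_nonneg_of_nonpos hs0 (by linarith)
        exact this.trans (le_max_right _ _)
      · have hy : c + ε ≤ Y ω := h1
        have key : s * (Y ω - (b - ε)) ≤ Y ω := by
          nlinarith [mul_nonneg (sub_nonneg.2 hs1) (sub_nonneg.2 hy)]
        exact key.trans (le_max_left _ _)
    have hlin : Integrable (fun ω => s * (Y ω - (b - ε))) μ₂ :=
      ((hYint.sub (integrable_const (b - ε))).const_mul s)
    have h := integral_mono_ae hlin hYpint hptwise
    have hcomp : ∫ ω, s * (Y ω - (b - ε)) ∂μ₂ = s * (ε - b) := by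
      rw [integral_const_mul, integral_sub hYint (integrable_const (b - ε)), hYmean,
        integral_const]
      simp
    linarith [hcomp ▸ h]
  rcases eq_or_lt_of_le hbc with heq | hlt
  · -- b = c forces b = c = 0, so ∫ max(X,0) = 0
    have hb : b = 0 := le_antisymm hb0 (heq ▸ hc0)
    have hc : c = 0 := heq ▸ hb
    have hP : ∫ ω, max (X ω) 0 ∂μ₁ = 0 := by
      have : ∀ᵐ ω ∂μ₁, max (X ω) 0 = 0 := by
        filter_upwards [hXsupp] with ω hω
        have h1 : X ω ≤ 0 := by rw [hc] at hω; exact hω.2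
        simp [max_eq_right h1]
      rw [integral_congr_ae this, integral_zero]
    have hpos : 0 < s * (ε - b) := by
      have hspos : 0 < s := by rw [hs_def]; apply div_pos <;> linarith
      have : 0 < ε - b := by linarith
      exact mul_pos hspos this
    linarith
  · -- b < c : upper bound ∫ max(X,0) ≤ (c/(c-b)) * (-b)
    have hcb : 0 < c - b := by linarith
    set r : ℝ := c / (c - b) with hr_def
    have hr_mul : r * (c - b) = c := div_mul_cancel₀ _ (ne_of_gt hcb)
    have hr0 : 0 ≤ r := div_nonneg hc0 hcb.le
    have hr1 : r ≤ 1 := by rw [hr_def, div_le_one hcb]; linarith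
    have hP : ∫ ω, max (X ω) 0 ∂μ₁ ≤ r * (0 - b) := by
      have hptwise : ∀ᵐ ω ∂μ₁, max (X ω) 0 ≤ r * (X ω - b) := by
        filter_upwards [hXsupp] with ω hω
        rcases le_or_gt (X ω) 0 with hx | hx
        · rw [max_eq_right hx]
          exact mul_nonneg hr0 (by linarith [hω.1])
        · rw [max_eq_left hx.le]
          nlinarith [mul_nonneg (sub_nonneg.2 hr1) (sub_nonneg.2 hω.2)]
      have hlin : Integrable (fun ω => r * (X ω - b)) μ₁ :=
        ((hXint.sub (integrable_const b)).const_mul r)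
      have h := integral_mono_ae hXpint hlin hptwise
      have hcomp : ∫ ω, r * (X ω - b) ∂μ₁ = r * (0 - b) := by
        rw [integral_const_mul, integral_sub hXint (integrable_const b), hXmean,
          integral_const]
        simp
      linarith [hcomp ▸ h]
    -- final strict comparison: r * (-b) < s * (ε - b)
    have hstrict : r * (0 - b) < s * (ε - b) := by
      rw [hr_def, hs_def]
      rw [div_mul_eq_mul_div, div_mul_eq_mul_div, div_lt_div_iff₀ hcb hden]
      nlinarith [sq_nonneg b, sq_nonneg c, mul_pos hε hcb, mul_nonneg (neg_nonneg.2 hb0) hc0]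
    linarith
end

section
/- Let ε > 0 and let a, b, c, d be real numbers with a ≤ b − ε, b ≤ c, and c + ε ≤ d. Let X and Y be real random variables with E[X] = E[Y] = 0, such that X ∈ [b, c] almost surely and Y ∈ [a, b − ε] ∪ [c + ε, d] almost surely. Then E[ max(−X, 0) ] < E[ max(−Y, 0) ]. -/
open MeasureTheory

/-- Let `ε > 0` and `a ≤ b − ε`, `b ≤ c`, `c + ε ≤ d`. If `X`, `Y` are mean-zero real
random variables with `X ∈ [b, c]` a.s. and `Y ∈ [a, b − ε] ∪ [c + ε, d]` a.s., then
`E[max(−X, 0)] < E[max(−Y, 0)]`. -/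
theorem stmt_16 {Ω₁ Ω₂ : Type*} [MeasurableSpace Ω₁] [MeasurableSpace Ω₂]
    (μ₁ : Measure Ω₁) (μ₂ : Measure Ω₂) [IsProbabilityMeasure μ₁] [IsProbabilityMeasure μ₂]
    (ε a b c d : ℝ) (hε : 0 < ε) (hab : a ≤ b - ε) (hbc : b ≤ c) (hcd : c + ε ≤ d)
    (X : Ω₁ → ℝ) (Y : Ω₂ → ℝ) (hX : Measurable X) (hY : Measurable Y)
    (hXmean : ∫ ω, X ω ∂μ₁ = 0) (hYmean : ∫ ω, Y ω ∂μ₂ = 0)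
    (hXsupp : ∀ᵐ ω ∂μ₁, X ω ∈ Set.Icc b c)
    (hYsupp : ∀ᵐ ω ∂μ₂, Y ω ∈ Set.Icc a (b - ε) ∪ Set.Icc (c + ε) d) :
    ∫ ω, max (-X ω) 0 ∂μ₁ < ∫ ω, max (-Y ω) 0 ∂μ₂ := by
  have hD : (0:ℝ) < c - b + 2*ε := by linarith
  -- integrability of X and Y
  have hXint : Integrable X μ₁ := by
    refine (integrable_const (|b| + |c|)).mono' hX.aestronglyMeasurable ?_
    filter_upwards [hXsupp] with ω hω
    rw [Real.norm_eq_abs, abs_le]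
    have h1 := neg_abs_le b
    have h2 := le_abs_self c
    have h3 := abs_nonneg b
    have h4 := abs_nonneg c
    exact ⟨by linarith [hω.1], by linarith [hω.2]⟩
  have hYbd : ∀ᵐ ω ∂μ₂, a ≤ Y ω ∧ Y ω ≤ d := by
    filter_upwards [hYsupp] with ω hω
    rcases hω with ⟨h1, h2⟩ | ⟨h1, h2⟩
    · exact ⟨h1, by linarith⟩
    · exact ⟨by linarith, h2⟩
  have hYint : Integrable Y μ₂ := by
    refine (integrable_const (|a| + |d|)).mono' hY.aestronglyMeasurable ?_
    filter_upwards [hYbd] with ω hω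
    rw [Real.norm_eq_abs, abs_le]
    have h1 := neg_abs_le a
    have h2 := le_abs_self d
    have h3 := abs_nonneg a
    have h4 := abs_nonneg d
    exact ⟨by linarith [hω.1], by linarith [hω.2]⟩
  -- b ≤ 0 ≤ c
  have hb0 : b ≤ 0 := by
    have h := integral_mono_ae (integrable_const b) hXint
      (by filter_upwards [hXsupp] with ω hω using hω.1)
    rw [integral_const] at h
    simp at h
    linarith [hXmean ▸ h]
  have hc0 : (0:ℝ) ≤ c := by
    have h := integral_mono_ae hXint (integrable_const c)
      (by filter_upwards [hXsupp] with ω hω using hω.2)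
    rw [integral_const] at h
    simp at h
    linarith [hXmean ▸ h]
  set D := c - b + 2*ε with hDdef
  set p := (ε - b) * (c + ε) / D with hp
  set q := (ε - b) / D with hq
  set δ := ε^2 / D with hδ
  have hδpos : 0 < δ := div_pos (by positivity) hD
  -- integrability of the max functions
  have hmX : Integrable (fun ω => max (-X ω) 0) μ₁ := by
    refine (integrable_const (-b)).mono' ?_ ?_
    · exact (hX.neg.max measurable_const).aestronglyMeasurable
    · filter_upwards [hXsupp] with ω hω
      rw [Real.norm_eq_abs, abs_of_nonneg (le_max_right _ _)]
      exact max_le (by linarith [hω.1]) (by linarith)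
  have hmY : Integrable (fun ω => max (-Y ω) 0) μ₂ := by
    refine (integrable_const (-a)).mono' ?_ ?_
    · exact (hY.neg.max measurable_const).aestronglyMeasurable
    · filter_upwards [hYbd] with ω hω
      rw [Real.norm_eq_abs, abs_of_nonneg (le_max_right _ _)]
      exact max_le (by linarith [hω.1]) (by linarith [hω.1, hbc, hε])
  -- step 1 : ∫ max(-X,0) ≤ p - δ
  have hstep1 : ∫ ω, max (-X ω) 0 ∂μ₁ ≤ p - δ := by
    have hint2 : Integrable (fun ω => p - q * X ω - δ) μ₁ :=
      ((integrable_const p).sub (hXint.const_mul q)).sub (integrable_const δ)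
    have hmono : ∫ ω, max (-X ω) 0 ∂μ₁ ≤ ∫ ω, (p - q * X ω - δ) ∂μ₁ := by
      refine integral_mono_ae hmX hint2 ?_
      filter_upwards [hXsupp] with ω hω
      have heq : p - q * X ω - δ = ((ε - b) * (c + ε) - (ε - b) * X ω - ε^2) / D := by
        rw [hp, hq, hδ]; ring
      rw [heq, le_div_iff₀ hD]
      rcases le_total (X ω) 0 with h | h
      · rw [max_eq_left (by linarith)]
        nlinarith [hω.1, hω.2, hε, hb0, hc0]
      · rw [max_eq_right (by linarith)]
        nlinarith [hω.1, hω.2, hε, hb0, hc0]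
    calc ∫ ω, max (-X ω) 0 ∂μ₁ ≤ ∫ ω, (p - q * X ω - δ) ∂μ₁ := hmono
      _ = ∫ ω, ((p - δ) - q * X ω) ∂μ₁ := by congr 1; ext ω; ring
      _ = p - δ := by
          rw [integral_sub (integrable_const (p - δ)) (hXint.const_mul q),
            integral_const_mul, hXmean, integral_const]
          simp
  -- step 2 : p ≤ ∫ max(-Y,0)
  have hstep2 : p ≤ ∫ ω, max (-Y ω) 0 ∂μ₂ := by
    have hint2 : Integrable (fun ω => p - q * Y ω) μ₂ :=
      (integrable_const p).sub (hYint.const_mul q)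
    have hmono : ∫ ω, (p - q * Y ω) ∂μ₂ ≤ ∫ ω, max (-Y ω) 0 ∂μ₂ := by
      refine integral_mono_ae hint2 hmY ?_
      filter_upwards [hYsupp] with ω hω
      have heq : p - q * Y ω = ((ε - b) * (c + ε) - (ε - b) * Y ω) / D := by
        rw [hp, hq]; ring
      rw [heq]
      rcases hω with ⟨h1, h2⟩ | ⟨h1, h2⟩
      · have : Y ω ≤ 0 := by linarith
        rw [div_le_iff₀ hD]
        have hm : max (-Y ω) 0 = -Y ω := max_eq_left (by linarith)
        rw [hm]
        nlinarith [hε, hb0, hc0]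
      · have hm : (0:ℝ) ≤ max (-Y ω) 0 := le_max_right _ _
        have : ((ε - b) * (c + ε) - (ε - b) * Y ω) / D ≤ 0 := by
          apply div_nonpos_of_nonpos_of_nonneg _ hD.le
          nlinarith [hε, hb0, hc0]
        linarith
    have hval : ∫ ω, (p - q * Y ω) ∂μ₂ = p := by
      rw [integral_sub (integrable_const p) (hYint.const_mul q),
        integral_const_mul, hYmean, integral_const]
      simp
    linarith [hval ▸ hmono]
  linarith
end

section
/- Let ε > 0 and let a, b, c, d be real numbers with a ≤ b − ε, b ≤ c, and c + ε ≤ d. Let X and Y be real random variables with E[X] = E[Y] = 0, such that X ∈ [b, c] almost surely and Y ∈ [a, b − ε] ∪ [c + ε, d] almost surely. Then E[ |X| ] < E[ |Y| ]. -/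
open MeasureTheory

/-- Let `ε > 0` and `a ≤ b − ε`, `b ≤ c`, `c + ε ≤ d`. If `X`, `Y` are mean-zero real
random variables with `X ∈ [b, c]` a.s. and `Y ∈ [a, b − ε] ∪ [c + ε, d]` a.s., then
`E[|X|] < E[|Y|]`. -/
theorem stmt_17 {Ω₁ Ω₂ : Type*} [MeasurableSpace Ω₁] [MeasurableSpace Ω₂]
    (μ₁ : Measure Ω₁) (μ₂ : Measure Ω₂) [IsProbabilityMeasure μ₁] [IsProbabilityMeasure μ₂]
    (ε a b c d : ℝ) (hε : 0 < ε) (hab : a ≤ b - ε) (hbc : b ≤ c) (hcd : c + ε ≤ d)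
    (X : Ω₁ → ℝ) (Y : Ω₂ → ℝ) (hX : Measurable X) (hY : Measurable Y)
    (hXmean : ∫ ω, X ω ∂μ₁ = 0) (hYmean : ∫ ω, Y ω ∂μ₂ = 0)
    (hXsupp : ∀ᵐ ω ∂μ₁, X ω ∈ Set.Icc b c)
    (hYsupp : ∀ᵐ ω ∂μ₂, Y ω ∈ Set.Icc a (b - ε) ∪ Set.Icc (c + ε) d) :
    ∫ ω, |X ω| ∂μ₁ < ∫ ω, |Y ω| ∂μ₂ := by
  -- integrability
  have hXbound : ∀ᵐ ω ∂μ₁, ‖X ω‖ ≤ max ‖b‖ ‖c‖ := by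
    filter_upwards [hXsupp] with ω h
    simpa [Real.norm_eq_abs] using abs_le_max_abs_abs h.1 h.2
  have hYbound : ∀ᵐ ω ∂μ₂, ‖Y ω‖ ≤ max ‖a‖ ‖d‖ := by
    filter_upwards [hYsupp] with ω h
    rcases h with ⟨h1, h2⟩ | ⟨h1, h2⟩ <;>
      · simp only [Real.norm_eq_abs]
        exact abs_le_max_abs_abs (by linarith) (by linarith)
  have hXi : Integrable X μ₁ :=
    (integrable_const _).mono' hX.aestronglyMeasurable hXbound
  have hYi : Integrable Y μ₂ :=
    (integrable_const _).mono' hY.aestronglyMeasurable hYbound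
  have hXai : Integrable (fun ω => |X ω|) μ₁ := hXi.abs
  have hYai : Integrable (fun ω => |Y ω|) μ₂ := hYi.abs
  -- b ≤ 0 ≤ c
  have hb0 : b ≤ 0 := by
    have h := integral_mono_ae (integrable_const b) hXi
      (hXsupp.mono fun ω h => h.1)
    simpa [hXmean] using h
  have hc0 : 0 ≤ c := by
    have h := integral_mono_ae hXi (integrable_const c)
      (hXsupp.mono fun ω h => h.2)
    simpa [hXmean] using h
  -- |Y| ≥ ε a.s.
  have hYε : ∀ᵐ ω ∂μ₂, ε ≤ |Y ω| := by
    filter_upwards [hYsupp] with ω h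
    rcases h with ⟨h1, h2⟩ | ⟨h1, h2⟩
    · have := neg_le_abs (Y ω); linarith
    · have := le_abs_self (Y ω); linarith
  have hεY : ε ≤ ∫ ω, |Y ω| ∂μ₂ := by
    have h := integral_mono_ae (integrable_const ε) hYai hYε
    simpa using h
  -- degenerate cases: X = 0 a.e.
  have hdeg : ∀ (h0 : ∀ᵐ ω ∂μ₁, X ω = 0), ∫ ω, |X ω| ∂μ₁ < ∫ ω, |Y ω| ∂μ₂ := by
    intro h0
    have : ∫ ω, |X ω| ∂μ₁ = 0 := by
      rw [integral_eq_zero_iff_of_nonneg_ae (Filter.Eventually.of_forall fun ω => abs_nonneg _) hXai]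
      filter_upwards [h0] with ω h
      simp [h]
    linarith
  rcases eq_or_lt_of_le hb0 with hb | hb
  · -- b = 0 : X ≥ 0 a.s. and mean zero
    apply hdeg
    have hpos : 0 ≤ᵐ[μ₁] X := hXsupp.mono fun ω h => by
      have := h.1; simp only [Pi.zero_apply]; linarith
    exact (integral_eq_zero_iff_of_nonneg_ae hpos hXi).mp hXmean
  rcases eq_or_lt_of_le hc0 with hc | hc
  · -- c = 0 : X ≤ 0 a.s.
    apply hdeg
    have hpos : 0 ≤ᵐ[μ₁] (fun ω => -X ω) := hXsupp.mono fun ω h => by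
      have := h.2; simp only [Pi.zero_apply]; linarith
    have hmean : ∫ ω, -X ω ∂μ₁ = 0 := by rw [integral_neg, hXmean]; ring
    have := (integral_eq_zero_iff_of_nonneg_ae hpos hXi.neg).mp hmean
    filter_upwards [this] with ω h
    simpa using h
  -- main case: b < 0 < c
  set l : ℝ := (b + c) / (c - b) with hl
  have hcb : 0 < c - b := by linarith
  have h1l : 0 < 1 - l := by
    have : l < 1 := by rw [hl, div_lt_one hcb]; linarith
    linarith
  have h2l : 0 < 1 + l := by
    have : -1 < l := by rw [hl, lt_div_iff₀ hcb]; linarith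
    linarith
  set M : ℝ := c * (1 - l) with hM
  have hM2 : -b * (1 + l) = M := by
    rw [hM, hl]; field_simp; ring
  set δ : ℝ := ε * min (1 - l) (1 + l) with hδ
  have hδpos : 0 < δ := mul_pos hε (lt_min h1l h2l)
  -- pointwise bounds
  have keyX : ∀ᵐ ω ∂μ₁, |X ω| - l * X ω ≤ M := by
    filter_upwards [hXsupp] with ω h
    obtain ⟨h1, h2⟩ := h
    rcases abs_cases (X ω) with ⟨he, _⟩ | ⟨he, _⟩
    · have := mul_le_mul_of_nonneg_left h2 h1l.le
      rw [he]; nlinarith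
    · have := mul_le_mul_of_nonneg_left h1 h2l.le
      rw [he]; nlinarith
  have keyY : ∀ᵐ ω ∂μ₂, M + δ ≤ |Y ω| - l * Y ω := by
    filter_upwards [hYsupp] with ω h
    rcases h with ⟨h1, h2⟩ | ⟨h1, h2⟩
    · have hmul := mul_le_mul_of_nonneg_left h2 h2l.le
      have habs := neg_le_abs (Y ω)
      have hmin : δ ≤ ε * (1 + l) :=
        mul_le_mul_of_nonneg_left (min_le_right _ _) hε.le
      nlinarith
    · have hmul := mul_le_mul_of_nonneg_left h1 h1l.le
      have habs := le_abs_self (Y ω)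
      have hmin : δ ≤ ε * (1 - l) :=
        mul_le_mul_of_nonneg_left (min_le_left _ _) hε.le
      nlinarith
  -- integrate
  have hXsub : Integrable (fun ω => |X ω| - l * X ω) μ₁ := hXai.sub (hXi.const_mul l)
  have hYsub : Integrable (fun ω => |Y ω| - l * Y ω) μ₂ := hYai.sub (hYi.const_mul l)
  have hXint : ∫ ω, (|X ω| - l * X ω) ∂μ₁ = ∫ ω, |X ω| ∂μ₁ := by
    rw [integral_sub hXai (hXi.const_mul l), integral_const_mul, hXmean]; ring
  have hYint : ∫ ω, (|Y ω| - l * Y ω) ∂μ₂ = ∫ ω, |Y ω| ∂μ₂ := by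
    rw [integral_sub hYai (hYi.const_mul l), integral_const_mul, hYmean]; ring
  have hXle : ∫ ω, |X ω| ∂μ₁ ≤ M := by
    rw [← hXint]
    have h := integral_mono_ae hXsub (integrable_const M) keyX
    simpa using h
  have hYge : M + δ ≤ ∫ ω, |Y ω| ∂μ₂ := by
    rw [← hYint]
    have h := integral_mono_ae (integrable_const (M + δ)) hYsub keyY
    simpa using h
  linarith
end

section
/- Fix an integer D ≥ 1. For each j ∈ {1,…,D}, let ε_j > 0, let a_j, b_j, c_j, d_j be reals with a_j ≤ b_j − ε_j, b_j ≤ c_j, c_j + ε_j ≤ d_j, and let s_j > 0. Let X and Y be ℝ^D-valued random vectors such that for every j, E[X_j] = E[Y_j] = 0, X_j ∈ [b_j, c_j] almost surely, and Y_j ∈ [a_j, b_j − ε_j] ∪ [c_j + ε_j, d_j] almost surely. Then E[ Σ_{j=1}^D |X_j| / s_j ] < E[ Σ_{j=1}^D |Y_j| / s_j ]. -/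
open MeasureTheory

lemma my_integrable_of_abs_bound {Ω : Type*} [MeasurableSpace Ω] (μ : Measure Ω)
    [IsFiniteMeasure μ] (f : Ω → ℝ) (hf : Measurable f) (M : ℝ)
    (h : ∀ᵐ ω ∂μ, |f ω| ≤ M) : Integrable f μ :=
  (integrable_const M).mono' hf.aestronglyMeasurable (by simpa [Real.norm_eq_abs] using h)

lemma my_mean_zero_bounds {Ω : Type*} [MeasurableSpace Ω] (μ : Measure Ω)
    [IsProbabilityMeasure μ] (f : Ω → ℝ) (hint : Integrable f μ) (b c : ℝ)
    (hsupp : ∀ᵐ ω ∂μ, f ω ∈ Set.Icc b c) (hmean : ∫ ω, f ω ∂μ = 0) :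
    b ≤ 0 ∧ 0 ≤ c := by
  constructor
  · have : ∫ _, b ∂μ ≤ ∫ ω, f ω ∂μ := by
      apply integral_mono_ae (integrable_const b) hint
      filter_upwards [hsupp] with ω hω using hω.1
    simpa [hmean] using this
  · have : ∫ ω, f ω ∂μ ≤ ∫ _, c ∂μ := by
      apply integral_mono_ae hint (integrable_const c)
      filter_upwards [hsupp] with ω hω using hω.2
    simpa [hmean] using this

lemma my_upper {Ω : Type*} [MeasurableSpace Ω] (μ : Measure Ω)
    [IsProbabilityMeasure μ] (f : Ω → ℝ) (hf : Measurable f) (b c : ℝ) (hbc : b ≤ c)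
    (hsupp : ∀ᵐ ω ∂μ, f ω ∈ Set.Icc b c) (hmean : ∫ ω, f ω ∂μ = 0) :
    ∫ ω, |f ω| ∂μ ≤ 2 * (-b) * c / (c - b) := by
  have hint : Integrable f μ := by
    apply my_integrable_of_abs_bound μ f hf (max (-b) c)
    filter_upwards [hsupp] with ω hω
    rcases hω with ⟨h1, h2⟩
    rw [abs_le]
    constructor
    · have := le_max_left (-b) c; linarith
    · have := le_max_right (-b) c; linarith
  obtain ⟨hb0, hc0⟩ := my_mean_zero_bounds μ f hint b c hsupp hmean
  rcases eq_or_lt_of_le hbc with heq | hlt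
  · -- b = c forces b = c = 0 and f = 0 a.e.
    have hb : b = 0 := le_antisymm hb0 (heq ▸ hc0)
    have hc : c = 0 := heq ▸ hb
    have : ∫ ω, |f ω| ∂μ = 0 := by
      rw [integral_eq_zero_iff_of_nonneg (fun ω => abs_nonneg _)]
      · filter_upwards [hsupp] with ω hω
        have : f ω = 0 := le_antisymm (hc ▸ hω.2) (hb ▸ hω.1)
        simp [this]
      · exact hint.abs
    rw [this, hb, hc]
    simp
  · have hd : (0:ℝ) < c - b := by linarith
    set k : ℝ := (c + b) / (c - b) with hk
    have hptwise : ∀ᵐ ω ∂μ, |f ω| ≤ k * f ω + (-b - b * k) := by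
      filter_upwards [hsupp] with ω hω
      rcases hω with ⟨h1, h2⟩
      have he : k * f ω + (-b - b * k) = (f ω * (c + b) - 2 * b * c) / (c - b) := by
        rw [hk]; field_simp; ring
      rw [he, le_div_iff₀ hd]
      rcases le_or_gt 0 (f ω) with hx | hx
      · rw [abs_of_nonneg hx]; nlinarith
      · rw [abs_of_neg hx]; nlinarith
    have hint2 : Integrable (fun ω => k * f ω + (-b - b * k)) μ :=
      (hint.const_mul k).add (integrable_const _)
    have h1 : ∫ ω, |f ω| ∂μ ≤ ∫ ω, k * f ω + (-b - b * k) ∂μ :=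
      integral_mono_ae hint.abs hint2 hptwise
    have h2 : ∫ ω, k * f ω + (-b - b * k) ∂μ = -b - b * k := by
      rw [integral_add (hint.const_mul k) (integrable_const _), integral_const_mul, hmean]
      simp
    rw [h2] at h1
    refine h1.trans_eq ?_
    rw [hk]; field_simp; ring

lemma my_lower {Ω : Type*} [MeasurableSpace Ω] (μ : Measure Ω)
    [IsProbabilityMeasure μ] (f : Ω → ℝ) (hf : Measurable f) (a p q d : ℝ)
    (hap : a ≤ p) (hp : p < 0) (hq : 0 < q) (hqd : q ≤ d)
    (hsupp : ∀ᵐ ω ∂μ, f ω ∈ Set.Icc a p ∪ Set.Icc q d) (hmean : ∫ ω, f ω ∂μ = 0) :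
    2 * (-p) * q / (q - p) ≤ ∫ ω, |f ω| ∂μ := by
  have hint : Integrable f μ := by
    apply my_integrable_of_abs_bound μ f hf (max (-a) d)
    filter_upwards [hsupp] with ω hω
    rw [abs_le]
    rcases hω with ⟨h1, h2⟩ | ⟨h1, h2⟩
    · constructor
      · have := le_max_left (-a) d; linarith
      · have := le_max_right (-a) d; linarith
    · constructor
      · have := le_max_left (-a) d
        have : (0:ℝ) ≤ max (-a) d := le_trans (by linarith : (0:ℝ) ≤ d) (le_max_right _ _)
        linarith
      · have := le_max_right (-a) d; linarith
  have hd2 : (0:ℝ) < q - p := by linarith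
  set k : ℝ := (q + p) / (q - p) with hk
  have hptwise : ∀ᵐ ω ∂μ, k * f ω + (-p - p * k) ≤ |f ω| := by
    filter_upwards [hsupp] with ω hω
    have he : k * f ω + (-p - p * k) = (f ω * (q + p) - 2 * p * q) / (q - p) := by
      rw [hk]; field_simp; ring
    rw [he, div_le_iff₀ hd2]
    rcases hω with ⟨h1, h2⟩ | ⟨h1, h2⟩
    · have hx : f ω ≤ p := h2
      rw [abs_of_nonpos (by linarith)]
      nlinarith
    · have hx : q ≤ f ω := h1
      rw [abs_of_nonneg (by linarith)]
      nlinarith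
  have hint2 : Integrable (fun ω => k * f ω + (-p - p * k)) μ :=
    (hint.const_mul k).add (integrable_const _)
  have h1 : ∫ ω, k * f ω + (-p - p * k) ∂μ ≤ ∫ ω, |f ω| ∂μ :=
    integral_mono_ae hint2 hint.abs hptwise
  have h2 : ∫ ω, k * f ω + (-p - p * k) ∂μ = -p - p * k := by
    rw [integral_add (hint.const_mul k) (integrable_const _), integral_const_mul, hmean]
    simp
  rw [h2] at h1
  refine le_trans (le_of_eq ?_) h1
  rw [hk]; field_simp; ring

lemma my_hm_lt (b c e : ℝ) (hb : b ≤ 0) (hc : 0 ≤ c) (he : 0 < e) :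
    2 * (-b) * c / (c - b) < 2 * (-(b - e)) * (c + e) / ((c + e) - (b - e)) := by
  have hrd : (0:ℝ) < (c + e) - (b - e) := by linarith
  rcases eq_or_lt_of_le (by linarith : b ≤ c) with heq | hlt
  · have hb0 : b = 0 := le_antisymm hb (heq ▸ hc)
    have hc0 : c = 0 := heq ▸ hb0
    rw [hb0, hc0]
    have hL : 2 * (-(0:ℝ)) * (0:ℝ) / ((0:ℝ) - 0) = 0 := by norm_num
    have hR : 2 * (-((0:ℝ) - e)) * ((0:ℝ) + e) / (((0:ℝ) + e) - ((0:ℝ) - e)) = e := by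
      field_simp [he.ne']
      ring
    rw [hL, hR]
    exact he
  · have hld : (0:ℝ) < c - b := by linarith
    rw [div_lt_div_iff₀ hld hrd]
    nlinarith [mul_pos (mul_pos he he) hld, mul_pos he (mul_pos hld hld),
      sq_nonneg (b + c), sq_nonneg (b - c), mul_pos he hld]

/-- for each coordinate `j` let `epsilon j > 0`, `a j <= b j - epsilon j`,
`b j <= c j`, `c j + epsilon j <= d j`, and `s j > 0`. If `X` and `Y` are mean-zero
random vectors with `X_j` supported in `[b j, c j]` a.s. and `Y_j` supported in
`[a j, b j - epsilon j] ∪ [c j + epsilon j, d j]` a.s., then the expected scaled l1 norm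
of `X` is strictly smaller than that of `Y`:
`E[ Σ_j |X_j| / s_j ] < E[ Σ_j |Y_j| / s_j ]`. -/
theorem stmt_18 {Ω₁ Ω₂ : Type*} [MeasurableSpace Ω₁] [MeasurableSpace Ω₂]
    (μ₁ : Measure Ω₁) (μ₂ : Measure Ω₂) [IsProbabilityMeasure μ₁] [IsProbabilityMeasure μ₂]
    (D : ℕ) (hD : 1 ≤ D) (ε a b c d s : Fin D → ℝ)
    (hε : ∀ j, 0 < ε j) (hab : ∀ j, a j ≤ b j - ε j) (hbc : ∀ j, b j ≤ c j)
    (hcd : ∀ j, c j + ε j ≤ d j) (hs : ∀ j, 0 < s j)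
    (X : Ω₁ → Fin D → ℝ) (Y : Ω₂ → Fin D → ℝ) (hX : Measurable X) (hY : Measurable Y)
    (hXmean : ∀ j, ∫ ω, X ω j ∂μ₁ = 0) (hYmean : ∀ j, ∫ ω, Y ω j ∂μ₂ = 0)
    (hXsupp : ∀ j, ∀ᵐ ω ∂μ₁, X ω j ∈ Set.Icc (b j) (c j))
    (hYsupp : ∀ j, ∀ᵐ ω ∂μ₂,
      Y ω j ∈ Set.Icc (a j) (b j - ε j) ∪ Set.Icc (c j + ε j) (d j)) :
    ∫ ω, ∑ j, |X ω j| / s j ∂μ₁ < ∫ ω, ∑ j, |Y ω j| / s j ∂μ₂ := by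
  have hXj : ∀ j, Measurable (fun ω => X ω j) := fun j => (measurable_pi_apply j).comp hX
  have hYj : ∀ j, Measurable (fun ω => Y ω j) := fun j => (measurable_pi_apply j).comp hY
  have hXint : ∀ j, Integrable (fun ω => X ω j) μ₁ := by
    intro j
    apply my_integrable_of_abs_bound μ₁ _ (hXj j) (max (-(b j)) (c j))
    filter_upwards [hXsupp j] with ω hω
    rw [abs_le]
    exact ⟨by have := le_max_left (-(b j)) (c j); linarith [hω.1],
      by have := le_max_right (-(b j)) (c j); linarith [hω.2]⟩
  have hYint : ∀ j, Integrable (fun ω => Y ω j) μ₂ := by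
    intro j
    apply my_integrable_of_abs_bound μ₂ _ (hYj j) (max (-(a j)) (d j))
    filter_upwards [hYsupp j] with ω hω
    rw [abs_le]
    have hm1 := le_max_left (-(a j)) (d j)
    have hm2 := le_max_right (-(a j)) (d j)
    have h1 := hab j; have h2 := hbc j; have h3 := hcd j; have h4 := hε j
    rcases hω with ⟨k1, k2⟩ | ⟨k1, k2⟩ <;> constructor <;> linarith
  -- key per-coordinate bounds need b j ≤ 0 ≤ c j
  have hkey : ∀ j, ∫ ω, |X ω j| ∂μ₁ < ∫ ω, |Y ω j| ∂μ₂ := by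
    intro j
    obtain ⟨hb0, hc0⟩ := my_mean_zero_bounds μ₁ _ (hXint j) (b j) (c j) (hXsupp j) (hXmean j)
    have h1 := my_upper μ₁ _ (hXj j) (b j) (c j) (hbc j) (hXsupp j) (hXmean j)
    have h2 := my_lower μ₂ _ (hYj j) (a j) (b j - ε j) (c j + ε j) (d j)
      (hab j) (by linarith [hε j]) (by linarith [hε j]) (hcd j) (hYsupp j) (hYmean j)
    have h3 := my_hm_lt (b j) (c j) (ε j) hb0 hc0 (hε j)
    calc ∫ ω, |X ω j| ∂μ₁ ≤ 2 * (-(b j)) * (c j) / (c j - b j) := h1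
      _ < 2 * (-((b j) - ε j)) * ((c j) + ε j) / (((c j) + ε j) - ((b j) - ε j)) := h3
      _ ≤ ∫ ω, |Y ω j| ∂μ₂ := h2
  have hXsum : ∫ ω, ∑ j, |X ω j| / s j ∂μ₁ = ∑ j, (∫ ω, |X ω j| ∂μ₁) / s j := by
    rw [integral_finset_sum _ (fun j _ => ((hXint j).abs.div_const (s j)))]
    exact Finset.sum_congr rfl fun j _ => integral_div _ _
  have hYsum : ∫ ω, ∑ j, |Y ω j| / s j ∂μ₂ = ∑ j, (∫ ω, |Y ω j| ∂μ₂) / s j := by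
    rw [integral_finset_sum _ (fun j _ => ((hYint j).abs.div_const (s j)))]
    exact Finset.sum_congr rfl fun j _ => integral_div _ _
  rw [hXsum, hYsum]
  have : Nonempty (Fin D) := ⟨⟨0, hD⟩⟩
  apply Finset.sum_lt_sum_of_nonempty Finset.univ_nonempty
  intro j _
  have := hs j
  gcongr
  exact hkey j
end
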